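/- Assume Δ_K ∉ {−4, −3}, Δ_K > 0, h = h(1), N_{K/ℚ}(γ^{1/h₂}) = 1, 2h₂ | d, and let n be a positive integer with d | n, Δ_K ∤ n, and Δ₁ | n or Δ₂ | n (so γ^{1/h₂} has a square root in K(ζ_n)). Let σ₀ be the unique element of Gal(K(ζ_n)/ℚ) with σ₀(√Δ_K) = −√Δ_K and σ₀(ζ_n) = ζ_n^{−1}. Then for any square root w ∈ K(ζ_n) of γ^{1/h₂}, one has σ₀(w) = w^{−1} if and only if either (c < 0 and Δ₁ | n) or (c > 0 and Δ₂ | n). -/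

import Mathlib

open scoped Classical
open Polynomial

noncomputable section

/-- The standard primitive `n`-th root of unity `e^{2πi/n}`. -/
def zeta (n : ℕ) : ℂ := Complex.exp (2 * Real.pi * Complex.I / n)

/-- `v ∣ d^∞`: every prime factor of `v` divides `d`. -/
def DvdInf (v d : ℕ) : Prop := ∀ p : ℕ, p.Prime → p ∣ v → p ∣ d

/-- `(h, m^∞)`: the largest divisor of `h` all of whose prime factors divide `m`. -/
def expPart (h m : ℕ) : ℕ :=
  ∏ p ∈ h.primeFactors, if p ∣ m then p ^ (h.factorization p) else 1

/-- The cyclotomic field `ℚ(ζ_n)` inside `ℂ`. -/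
def Qzeta (n : ℕ) : IntermediateField ℚ ℂ := IntermediateField.adjoin ℚ {zeta n}

/-- The cyclotomic-Kummer extension `K(ζ_n, γ^{1/d})` inside `ℂ` (for `d ∣ n` this does
not depend on the choice of the `d`-th root of `γ`, so we adjoin all of them). -/
def KK (K : IntermediateField ℚ ℂ) (γ : ℂ) (n d : ℕ) : IntermediateField ℚ ℂ :=
  K ⊔ IntermediateField.adjoin ℚ ({zeta n} ∪ {y : ℂ | y ^ d = γ})

/-- Existence of an automorphism σ of `K(ζ_n, γ^{1/d})` with `σ(√Δ) = −√Δ`,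
`σ(ζ_n) = ζ_n⁻¹` and `σ(γ^{1/d}) = γ^{−1/d}`. -/
def SigmaExists (K : IntermediateField ℚ ℂ) (γ : ℂ) (Δ : ℤ) (n d : ℕ) : Prop :=
  ∃ σ : KK K γ n d ≃ₐ[ℚ] KK K γ n d,
    (∀ x : KK K γ n d, (x : ℂ) ^ 2 = (Δ : ℂ) → σ x = -x) ∧
    (∀ x : KK K γ n d, (x : ℂ) = zeta n → σ x * x = 1) ∧
    (∀ x : KK K γ n d, (x : ℂ) ^ d = γ → σ x * x = 1)

/-- `δ_γ(d) = Σ_{v|d^∞} Σ_{u|d} μ(u)(1+[σ_{u,v} exists])/[K_{dv,uv}:ℚ]`. -/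
def delta (K : IntermediateField ℚ ℂ) (γ : ℂ) (Δ : ℤ) (d : ℕ) : ℝ :=
  ∑' v : ℕ, if 0 < v ∧ DvdInf v d then
      ∑ u ∈ d.divisors,
        (ArithmeticFunction.moebius u : ℝ) *
          (1 + if SigmaExists K γ Δ (d * v) (u * v) then 1 else 0) /
            (Module.finrank ℚ (KK K γ (d * v) (u * v)) : ℝ)
    else 0

/-- `δ_γ^+(d) = Σ_{v|d^∞} Σ_{u|d} μ(u)/[K_{dv,uv}:ℚ]`. -/
def deltaPlus (K : IntermediateField ℚ ℂ) (γ : ℂ) (d : ℕ) : ℝ :=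
  ∑' v : ℕ, if 0 < v ∧ DvdInf v d then
      ∑ u ∈ d.divisors,
        (ArithmeticFunction.moebius u : ℝ) /
            (Module.finrank ℚ (KK K γ (d * v) (u * v)) : ℝ)
    else 0

/-- `δ_γ^-(d) = Σ_{v|d^∞} Σ_{u|d} μ(u)[σ_{u,v} exists]/[K_{dv,uv}:ℚ]`. -/
def deltaMinus (K : IntermediateField ℚ ℂ) (γ : ℂ) (Δ : ℤ) (d : ℕ) : ℝ :=
  ∑' v : ℕ, if 0 < v ∧ DvdInf v d then
      ∑ u ∈ d.divisors,
        (ArithmeticFunction.moebius u : ℝ) *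
          (if SigmaExists K γ Δ (d * v) (u * v) then 1 else 0) /
            (Module.finrank ℚ (KK K γ (d * v) (u * v)) : ℝ)
    else 0

/-- `S_{d,e,h}(ν) = Σ_{v|d^∞, e|v} Σ_{u|d} μ(u)(uv,h)[ν∣uv]/(φ(dv)uv)`. -/
def Ssum (d e h ν : ℕ) : ℝ :=
  ∑' v : ℕ, if 0 < v ∧ DvdInf v d ∧ e ∣ v then
      ∑ u ∈ d.divisors,
        (ArithmeticFunction.moebius u : ℝ) * (Nat.gcd (u * v) h : ℝ) *
          (if ν ∣ u * v then 1 else 0) /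
            ((Nat.totient (d * v) : ℝ) * ((u * v : ℕ) : ℝ))
    else 0

/-- The fieldConductor of an abelian subfield of `ℂ`: the least `m ≥ 1` with `F ⊆ ℚ(ζ_m)`. -/
def fieldConductor (F : IntermediateField ℚ ℂ) : ℕ :=
  sInf {m : ℕ | 0 < m ∧ F ≤ Qzeta m}

/-- `ℚ(√c)` inside `ℂ`. -/
def Qsqrt (c : ℚ) : IntermediateField ℚ ℂ :=
  IntermediateField.adjoin ℚ {z : ℂ | z ^ 2 = (c : ℂ)}

/-- The absolute value of the discriminant of the quadratic (or trivial) field `ℚ(√c)`,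
realised as its fieldConductor. -/
def qdisc (c : ℚ) : ℕ := fieldConductor (Qsqrt c)

/-- `h(ζ) = h`: `h` is the largest `n ≥ 1` with `ζγ ∈ (K^×)^n`. -/
def HVal (K : IntermediateField ℚ ℂ) (γ ζ : ℂ) (h : ℕ) : Prop :=
  (0 < h ∧ ∃ x ∈ K, x ^ h = ζ * γ) ∧
    ∀ n : ℕ, 0 < n → (∃ x ∈ K, x ^ n = ζ * γ) → n ≤ h

/-- `h = max_{ζ ∈ μ(K)} h(ζ)` (upper-bound part). -/
def IsHMax (K : IntermediateField ℚ ℂ) (γ : ℂ) (h : ℕ) : Prop :=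
  ∀ ζ : ℂ, ζ ∈ K → (∃ k : ℕ, 0 < k ∧ ζ ^ k = 1) →
    ∀ n : ℕ, 0 < n → (∃ x ∈ K, x ^ n = ζ * γ) → n ≤ h

def NotRootOfUnity (γ : ℂ) : Prop := ∀ k : ℕ, 0 < k → γ ^ k ≠ 1

end


lemma zeta_pow_div {m n : ℕ} (hmn : m ∣ n) (hn : 0 < n) : zeta n ^ (n / m) = zeta m := by
  obtain ⟨k, rfl⟩ := hmn
  have hm : m ≠ 0 := by rintro rfl; simp at hn
  have hk : k ≠ 0 := by rintro rfl; simp at hn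
  rw [Nat.mul_div_cancel_left _ (Nat.pos_of_ne_zero hm)]
  rw [zeta, zeta, ← Complex.exp_nat_mul]
  congr 1
  have hmc : (m : ℂ) ≠ 0 := Nat.cast_ne_zero.mpr hm
  have hkc : (k : ℂ) ≠ 0 := Nat.cast_ne_zero.mpr hk
  push_cast
  field_simp

lemma Qzeta_le {m n : ℕ} (hmn : m ∣ n) (hn : 0 < n) : Qzeta m ≤ Qzeta n := by
  rw [Qzeta, IntermediateField.adjoin_le_iff]
  intro y hy
  rw [Set.mem_singleton_iff] at hy
  subst hy
  rw [← zeta_pow_div hmn hn]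
  exact pow_mem (IntermediateField.mem_adjoin_simple_self ℚ _) _

lemma Qsqrt_le_Qzeta {c : ℚ} {n : ℕ} (hn : 0 < n) (hdvd : qdisc c ∣ n) :
    Qsqrt c ≤ Qzeta n := by
  have h0 : qdisc c ≠ 0 := by
    rintro h
    rw [h] at hdvd
    exact hn.ne' (Nat.eq_zero_of_zero_dvd hdvd)
  have hne : {m : ℕ | 0 < m ∧ Qsqrt c ≤ Qzeta m}.Nonempty := by
    by_contra h
    rw [Set.not_nonempty_iff_eq_empty] at h
    exact h0 (by rw [qdisc, fieldConductor, h, Nat.sInf_empty])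
  exact (Nat.sInf_mem hne).2.trans (Qzeta_le hdvd hn)

lemma conj_eq_self_of_sq {z : ℂ} {r : ℝ} (h : z ^ 2 = (r : ℂ)) (hr : 0 < r) :
    (starRingEnd ℂ) z = z := by
  have h1 : z.re * z.im + z.im * z.re = 0 := by
    have := congrArg Complex.im h
    rwa [sq, Complex.mul_im, Complex.ofReal_im] at this
  have h2 : z.re * z.re - z.im * z.im = r := by
    have := congrArg Complex.re h
    rwa [sq, Complex.mul_re, Complex.ofReal_re] at this
  rw [Complex.conj_eq_iff_im]
  rcases mul_eq_zero.mp (by linarith : z.re * z.im = 0) with h | h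
  · nlinarith [sq_nonneg z.im]
  · exact h

lemma conj_eq_neg_of_sq {z : ℂ} {r : ℝ} (h : z ^ 2 = (r : ℂ)) (hr : r < 0) :
    (starRingEnd ℂ) z = -z := by
  have h1 : z.re * z.im + z.im * z.re = 0 := by
    have := congrArg Complex.im h
    rwa [sq, Complex.mul_im, Complex.ofReal_im] at this
  have h2 : z.re * z.re - z.im * z.im = r := by
    have := congrArg Complex.re h
    rwa [sq, Complex.mul_re, Complex.ofReal_re] at this
  have hre : z.re = 0 := by
    rcases mul_eq_zero.mp (by linarith : z.re * z.im = 0) with h | h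
    · exact h
    · nlinarith [sq_nonneg z.re]
  apply Complex.ext <;> simp [hre]

lemma sigma_conj (F : IntermediateField ℚ ℂ) (σ : F ≃ₐ[ℚ] F) (n : ℕ)
    (hle : Qzeta n ≤ F)
    (hz : ∀ x : F, (x : ℂ) = zeta n → σ x * x = 1)
    (x : F) (hx : (x : ℂ) ∈ Qzeta n) :
    ((σ x : F) : ℂ) = (starRingEnd ℂ) (x : ℂ) := by
  have hζF : zeta n ∈ F := hle (IntermediateField.mem_adjoin_simple_self ℚ _)
  have hζne : zeta n ≠ 0 := Complex.exp_ne_zero _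
  have hconjζ : (starRingEnd ℂ) (zeta n) * zeta n = 1 := by
    rw [zeta, ← Complex.exp_conj, ← Complex.exp_add, ← Complex.exp_zero]
    congr 1
    rw [map_div₀]
    simp [Complex.conj_I, map_ofNat]
    ring
  set z : F := ⟨zeta n, hζF⟩ with hzdef
  have hz1 : σ z * z = 1 := hz z rfl
  have hσz : ((σ z : F) : ℂ) = (starRingEnd ℂ) (zeta n) := by
    have hcoe : ((σ z : F) : ℂ) * zeta n = 1 := by
      have := congrArg (fun t : F => (t : ℂ)) hz1
      push_cast at this
      simpa using this
    have h2 : (starRingEnd ℂ) (zeta n) = (zeta n)⁻¹ :=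
      eq_inv_of_mul_eq_one_left hconjζ
    rw [h2]
    exact eq_inv_of_mul_eq_one_left hcoe
  let φ₁ : Qzeta n →ₐ[ℚ] ℂ := F.val.comp ((σ : F →ₐ[ℚ] F).comp
    (IntermediateField.inclusion hle))
  let φ₂ : Qzeta n →ₐ[ℚ] ℂ :=
    ((Complex.conjAe.toAlgHom.restrictScalars ℚ)).comp (Qzeta n).val
  have hφ : φ₁ = φ₂ := by
    apply IntermediateField.algHom_ext_of_eq_adjoin ℚ (rfl : Qzeta n = _)
    intro y hy
    rw [Set.mem_singleton_iff] at hy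
    subst hy
    show (F.val (σ (IntermediateField.inclusion hle _))) = _
    have hincl : IntermediateField.inclusion hle
        ⟨zeta n, (rfl : Qzeta n = _).ge (IntermediateField.subset_adjoin _ _ (Set.mem_singleton _))⟩ = z := by
      apply Subtype.ext
      rfl
    rw [hincl]
    exact hσz
  have hx' : IntermediateField.inclusion hle ⟨(x : ℂ), hx⟩ = x := by
    apply Subtype.ext; rfl
  have := congrArg (fun ψ : Qzeta n →ₐ[ℚ] ℂ => ψ ⟨(x : ℂ), hx⟩) hφ
  simp only [φ₁, φ₂, AlgHom.comp_apply] at this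
  exact this

/-- computation of `σ₀(γ^{1/2h₂})` via the sign of `c`. -/
theorem stmt18
    (K : IntermediateField ℚ ℂ) [NumberField K]
    (hquad : Module.finrank ℚ K = 2)
    (hdisc4 : NumberField.discr K ≠ -4) (hdisc3 : NumberField.discr K ≠ -3)
    (hdiscpos : 0 < NumberField.discr K)
    (γ : ℂ) (hγK : γ ∈ K) (hrou : NotRootOfUnity γ)
    (h : ℕ) (hH1 : HVal K γ 1 h) (hHmax : IsHMax K γ h)
    (γ₀ : K) (hγ₀ : (γ₀ : ℂ) ^ h = γ)
    (s : ℂ) (hs : s ^ 2 = (NumberField.discr K : ℂ))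
    (u v : ℚ) (hu : u ≠ 0) (hv : v ≠ 0)
    (hrep : (γ₀ : ℂ) ^ (h / expPart h 2) = (u : ℂ) + (v : ℂ) * s)
    (hnorm : u ^ 2 - v ^ 2 * (NumberField.discr K : ℚ) = 1)
    (c : ℚ) (hc : c = (u - 1) / 2)
    (D₁ D₂ : ℕ) (hD₁ : D₁ = qdisc c) (hD₂ : D₂ = qdisc (c / (NumberField.discr K : ℚ)))
    (d : ℕ) (hd : 0 < d) (h2h2d : 2 * expPart h 2 ∣ d)
    (n : ℕ) (hn : 0 < n) (hdn : d ∣ n)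
    (hΔKn : ¬ ((NumberField.discr K) ∣ (n : ℤ)))
    (hsq : D₁ ∣ n ∨ D₂ ∣ n) :
    ∀ σ₀ : (K ⊔ Qzeta n : IntermediateField ℚ ℂ) ≃ₐ[ℚ]
        (K ⊔ Qzeta n : IntermediateField ℚ ℂ),
      (∀ x : (K ⊔ Qzeta n : IntermediateField ℚ ℂ),
        (x : ℂ) ^ 2 = (NumberField.discr K : ℂ) → σ₀ x = -x) →
      (∀ x : (K ⊔ Qzeta n : IntermediateField ℚ ℂ),
        (x : ℂ) = zeta n → σ₀ x * x = 1) →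
      ∀ w : (K ⊔ Qzeta n : IntermediateField ℚ ℂ),
        (w : ℂ) ^ 2 = (γ₀ : ℂ) ^ (h / expPart h 2) →
          (σ₀ w * w = 1 ↔ ((c < 0 ∧ D₁ ∣ n) ∨ (0 < c ∧ D₂ ∣ n))) := by
  set F : IntermediateField ℚ ℂ := K ⊔ Qzeta n with hFdef
  set Δ : ℤ := NumberField.discr K with hΔdef
  intro σ₀ hσs hσζ w hw
  -- basic numeric facts
  have hΔQ : (0 : ℚ) < (Δ : ℚ) := by exact_mod_cast hdiscpos
  have hΔC : ((Δ : ℚ) : ℂ) ≠ 0 := by exact_mod_cast hΔQ.ne'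
  have hΔC' : (Δ : ℂ) ≠ 0 := by exact_mod_cast hΔQ.ne'
  have hsne : s ≠ 0 := by
    intro h0; rw [h0] at hs; simp at hs; exact hΔC' hs.symm
  have hvC : (v : ℂ) ≠ 0 := by exact_mod_cast hv
  have hu1 : u ≠ 1 := by
    intro h0
    rw [h0] at hnorm
    have hv2 : v ^ 2 * (Δ : ℚ) = 0 := by linarith
    rcases mul_eq_zero.mp hv2 with h' | h'
    · exact hv (pow_eq_zero_iff two_ne_zero |>.mp h')
    · exact hΔQ.ne' h'
  have hcne : c ≠ 0 := by
    rw [hc]; intro h0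
    apply hu1
    field_simp at h0
    linarith
  -- the square of w in ℂ
  have hα : (w : ℂ) ^ 2 = (u : ℂ) + (v : ℂ) * s := hw.trans hrep
  have hnormC : (u : ℂ) ^ 2 - (v : ℂ) ^ 2 * (Δ : ℂ) = 1 := by exact_mod_cast hnorm
  have hαinv : ((u : ℂ) + (v : ℂ) * s) * ((u : ℂ) - (v : ℂ) * s) = 1 := by
    linear_combination hnormC - (v : ℂ) ^ 2 * hs
  have hwC : (w : ℂ) ≠ 0 := by
    intro h0
    rw [h0] at hα
    rw [← hα] at hαinv
    simp at hαinv
  have hwne : w ≠ 0 := by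
    intro h0; apply hwC; rw [h0]; rfl
  -- s as an element of F
  have hsmem : s ∈ F := by
    have hrw : ((w : ℂ) ^ 2 - (u : ℂ)) / (v : ℂ) = s := by
      rw [hα]; field_simp; ring
    rw [← hrw]
    exact div_mem (sub_mem (pow_mem w.2 2) (SubfieldClass.ratCast_mem _ u))
      (SubfieldClass.ratCast_mem _ v)
  set S : F := ⟨s, hsmem⟩ with hSdef
  have hScoe : (S : ℂ) = s := rfl
  have hσS : σ₀ S = -S := hσs S hs
  have hSne : S ≠ 0 := by
    intro h0; apply hsne; rw [← hScoe, h0]; rfl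
  -- element-level identity for w^2
  have hw2 : w ^ 2 = ((u : F) + (v : F) * S) := by
    apply Subtype.ext
    push_cast
    rw [hα]
  have hσw2 : σ₀ (w ^ 2) = (u : F) - (v : F) * S := by
    rw [hw2, map_add, map_mul, map_ratCast, map_ratCast, hσS]
    ring
  have hS2 : S ^ 2 = ((Δ : ℚ) : F) := by
    apply Subtype.ext
    push_cast
    rw [hScoe, hs]
  have hx2 : (σ₀ w * w) ^ 2 = 1 := by
    calc (σ₀ w * w) ^ 2 = σ₀ (w ^ 2) * w ^ 2 := by rw [mul_pow, ← map_pow]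
    _ = ((u : F) - (v : F) * S) * ((u : F) + (v : F) * S) := by rw [hσw2, hw2]
    _ = (u : F) ^ 2 - (v : F) ^ 2 * S ^ 2 := by ring
    _ = 1 := by
        rw [hS2]
        have : ((u : F)) ^ 2 - ((v : F)) ^ 2 * ((Δ : ℚ) : F)
            = ((u ^ 2 - v ^ 2 * (Δ : ℚ) : ℚ) : F) := by push_cast; ring
        rw [this, hnorm, Rat.cast_one]
  have hdich : σ₀ w * w = 1 ∨ σ₀ w * w = -1 :=
    mul_self_eq_one_iff.mp (by rw [← pow_two]; exact hx2)
  have h2ne : (2 : F) ≠ 0 := two_ne_zero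
  -- the element Q with Q^2 = c
  set Q : F := (w - w⁻¹) / 2 with hQdef
  have hQcoe : (Q : ℂ) = ((w : ℂ) - (w : ℂ)⁻¹) / 2 := by
    push_cast
    rfl
  have hWinv2 : ((w : ℂ)⁻¹) ^ 2 = (u : ℂ) - (v : ℂ) * s := by
    rw [inv_pow, hα]
    exact inv_eq_of_mul_eq_one_right hαinv
  have hQsq : (Q : ℂ) ^ 2 = (c : ℂ) := by
    have hcC : (c : ℂ) = ((u : ℂ) - 1) / 2 := by rw [hc]; push_cast; ring
    have hexp : ((w : ℂ) - (w : ℂ)⁻¹) ^ 2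
        = ((u : ℂ) + (v : ℂ) * s) - 2 + ((u : ℂ) - (v : ℂ) * s) := by
      have h1 : (w : ℂ) * (w : ℂ)⁻¹ = 1 := mul_inv_cancel₀ hwC
      rw [sub_sq, hα, hWinv2]
      linear_combination (-2 : ℂ) * h1
    rw [hQcoe, div_pow, hexp, hcC]
    ring
  have hQC0 : (Q : ℂ) ≠ 0 := by
    intro h0
    rw [h0] at hQsq
    simp at hQsq
    exact hcne (by exact_mod_cast hQsq.symm)
  have hQne : Q ≠ 0 := by
    intro h0; apply hQC0; rw [h0]; rfl
  -- main dichotomy via Q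
  have hQiff : (σ₀ w * w = 1) ↔ σ₀ Q = -Q := by
    constructor
    · intro h1
      have hσweq : σ₀ w = w⁻¹ := eq_inv_of_mul_eq_one_left h1
      rw [hQdef, map_div₀, map_sub, map_inv₀, hσweq, inv_inv, map_ofNat]
      ring
    · intro h2
      rcases hdich with h1 | h1
      · exact h1
      · exfalso
        have hσweq : σ₀ w = -w⁻¹ := by
          have := congrArg (· * w⁻¹) h1
          simpa [mul_assoc, mul_inv_cancel₀ hwne] using this
        have hfix : σ₀ Q = Q := by
          rw [hQdef, map_div₀, map_sub, map_inv₀, hσweq, inv_neg, inv_inv, map_ofNat]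
          ring
        rw [hfix] at h2
        apply hQne
        have h2Q : (2 : F) * Q = 0 := by linear_combination h2
        rcases mul_eq_zero.mp h2Q with h' | h'
        · exact absurd h' h2ne
        · exact h'
  have hQsqR : (Q : ℂ) ^ 2 = ((c : ℝ) : ℂ) := by rw [hQsq]; norm_cast
  -- the element R with R^2 = c/Δ : coercion facts
  have hRsq : (s⁻¹ * (Q : ℂ)) ^ 2 = ((c / (Δ : ℚ) : ℚ) : ℂ) := by
    rw [mul_pow, inv_pow, hs, hQsq]
    push_cast
    ring
  have hRsqR : (s⁻¹ * (Q : ℂ)) ^ 2 = (((c / (Δ : ℚ) : ℚ) : ℝ) : ℂ) := by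
    rw [hRsq]; norm_cast
  have hconjs : (starRingEnd ℂ) s = s := by
    refine conj_eq_self_of_sq (r := ((Δ : ℚ) : ℝ)) ?_ (by exact_mod_cast hΔQ)
    rw [hs]; norm_cast
  -- σ₀ on Q when D₂ ∣ n : compute via R
  have hD2compute : D₂ ∣ n → ((σ₀ Q : F) : ℂ)
      = (-s) * ((starRingEnd ℂ) (s⁻¹ * (Q : ℂ))) := by
    intro h2
    have hRmemF : s⁻¹ * (Q : ℂ) ∈ F := mul_mem (inv_mem hsmem) Q.2
    set R : F := ⟨s⁻¹ * (Q : ℂ), hRmemF⟩ with hRdef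
    have hRmem : (R : ℂ) ∈ Qzeta n :=
      Qsqrt_le_Qzeta hn (hD₂ ▸ h2) (IntermediateField.subset_adjoin _ _ hRsq)
    have hσR : ((σ₀ R : F) : ℂ) = (starRingEnd ℂ) (R : ℂ) :=
      sigma_conj F σ₀ n le_sup_right hσζ R hRmem
    have hQSR : Q = S * R := by
      apply Subtype.ext
      have hm : ((S * R : F) : ℂ) = s * (s⁻¹ * (Q : ℂ)) := rfl
      rw [hm, ← mul_assoc, mul_inv_cancel₀ hsne, one_mul]
    have : σ₀ Q = -S * σ₀ R := by rw [hQSR, map_mul, hσS]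
    have hco := congrArg (fun t : F => (t : ℂ)) this
    simp only [MulMemClass.coe_mul] at hco
    rw [hσR] at hco
    have hneg : ((-S : F) : ℂ) = -s := rfl
    rw [hneg] at hco
    exact hco
  -- mutual exclusivity of D₁ ∣ n and D₂ ∣ n
  have hexcl : ¬(D₁ ∣ n ∧ D₂ ∣ n) := by
    rintro ⟨h1, h2⟩
    have hQmem : (Q : ℂ) ∈ Qzeta n :=
      Qsqrt_le_Qzeta hn (hD₁ ▸ h1) (IntermediateField.subset_adjoin _ _ hQsq)
    have hσQ : ((σ₀ Q : F) : ℂ) = (starRingEnd ℂ) (Q : ℂ) :=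
      sigma_conj F σ₀ n le_sup_right hσζ Q hQmem
    have hco := hD2compute h2
    rw [hσQ] at hco
    rw [map_mul, map_inv₀, hconjs] at hco
    have hss : s * s⁻¹ = 1 := mul_inv_cancel₀ hsne
    have hz : (starRingEnd ℂ) (Q : ℂ) = 0 := by
      have h2Q : (2 : ℂ) * (starRingEnd ℂ) (Q : ℂ) = 0 := by
        linear_combination hco - (starRingEnd ℂ) ((Q : ℂ)) * hss
      rcases mul_eq_zero.mp h2Q with h' | h'
      · norm_num at h'
      · exact h'
    exact hQC0 (by simpa using star_eq_zero.mp hz)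
  -- final case analysis
  rcases hsq with h1 | h1
  · -- D₁ ∣ n
    have hQmem : (Q : ℂ) ∈ Qzeta n :=
      Qsqrt_le_Qzeta hn (hD₁ ▸ h1) (IntermediateField.subset_adjoin _ _ hQsq)
    have hσQ : ((σ₀ Q : F) : ℂ) = (starRingEnd ℂ) (Q : ℂ) :=
      sigma_conj F σ₀ n le_sup_right hσζ Q hQmem
    rcases lt_trichotomy c 0 with hclt | hc0 | hcgt
    · have hconjQ : (starRingEnd ℂ) (Q : ℂ) = -(Q : ℂ) :=
        conj_eq_neg_of_sq hQsqR (by exact_mod_cast hclt)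
      have hQeq : σ₀ Q = -Q := by
        apply Subtype.ext
        rw [hσQ, hconjQ]
        push_cast
        rfl
      rw [hQiff]
      exact iff_of_true hQeq (Or.inl ⟨hclt, h1⟩)
    · exact absurd hc0 hcne
    · have hconjQ : (starRingEnd ℂ) (Q : ℂ) = (Q : ℂ) :=
        conj_eq_self_of_sq hQsqR (by exact_mod_cast hcgt)
      have hQneq : σ₀ Q ≠ -Q := by
        intro h0
        have hco := congrArg (fun t : F => (t : ℂ)) h0
        rw [hσQ, hconjQ] at hco
        have hnegc : ((-Q : F) : ℂ) = -(Q : ℂ) := by push_cast; rfl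
        rw [hnegc] at hco
        apply hQC0
        have h2Q : (2 : ℂ) * (Q : ℂ) = 0 := by linear_combination hco
        rcases mul_eq_zero.mp h2Q with h' | h'
        · norm_num at h'
        · exact h'
      rw [hQiff]
      apply iff_of_false hQneq
      rintro (⟨h', _⟩ | ⟨_, h2'⟩)
      · exact absurd h' (not_lt.mpr hcgt.le)
      · exact hexcl ⟨h1, h2'⟩
  · -- D₂ ∣ n
    have hco := hD2compute h1
    rcases lt_trichotomy c 0 with hclt | hc0 | hcgt
    · -- c < 0 : c/Δ < 0, conj R = -R, σ₀ Q = Q, LHS false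
      have hcd : (c / (Δ : ℚ) : ℚ) < 0 := div_neg_of_neg_of_pos hclt hΔQ
      have hconjR : (starRingEnd ℂ) (s⁻¹ * (Q : ℂ)) = -(s⁻¹ * (Q : ℂ)) :=
        conj_eq_neg_of_sq hRsqR (by exact_mod_cast hcd)
      rw [hconjR] at hco
      have hQfix : σ₀ Q = Q := by
        apply Subtype.ext
        rw [hco]
        show (-s) * -(s⁻¹ * (Q : ℂ)) = (Q : ℂ)
        rw [neg_mul_neg, ← mul_assoc, mul_inv_cancel₀ hsne, one_mul]
      have hQneq : σ₀ Q ≠ -Q := by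
        rw [hQfix]
        intro h0
        apply hQne
        have h2Q : (2 : F) * Q = 0 := by linear_combination h0
        rcases mul_eq_zero.mp h2Q with h' | h'
        · exact absurd h' h2ne
        · exact h'
      rw [hQiff]
      apply iff_of_false hQneq
      rintro (⟨_, h1'⟩ | ⟨h', _⟩)
      · exact hexcl ⟨h1', h1⟩
      · exact absurd h' (not_lt.mpr hclt.le)
    · exact absurd hc0 hcne
    · -- c > 0 : conj R = R, σ₀ Q = -Q, LHS true
      have hcd : (0 : ℚ) < (c / (Δ : ℚ) : ℚ) := div_pos hcgt hΔQ
      have hconjR : (starRingEnd ℂ) (s⁻¹ * (Q : ℂ)) = s⁻¹ * (Q : ℂ) :=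
        conj_eq_self_of_sq hRsqR (by exact_mod_cast hcd)
      rw [hconjR] at hco
      have hQeq : σ₀ Q = -Q := by
        apply Subtype.ext
        rw [hco]
        show (-s) * (s⁻¹ * (Q : ℂ)) = ((-Q : F) : ℂ)
        have hnegc : ((-Q : F) : ℂ) = -(Q : ℂ) := by push_cast; rfl
        rw [hnegc, neg_mul, ← mul_assoc, mul_inv_cancel₀ hsne, one_mul]
      rw [hQiff]
      exact iff_of_true hQeq (Or.inr ⟨hcgt, h1⟩)
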